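/- For any finite simple graph G, |nucleus(G)| + |diadem(G)| ≤ 2α(G). -/
import Mathlib


open Set

variable {V : Type*} [Fintype V]

/-- `S` is an independent set in `G`: no two of its vertices are adjacent. -/
def IsIndep (G : SimpleGraph V) (S : Set V) : Prop :=
  ∀ u ∈ S, ∀ v ∈ S, ¬ G.Adj u v

/-- The neighborhood `N(X)` of a set of vertices. -/
def nbhd (G : SimpleGraph V) (X : Set V) : Set V := {v | ∃ u ∈ X, G.Adj u v}

/-- The difference `d(X) = |X| - |N(X)|` computed in the induced subgraph `G[W]`
(neighborhoods are intersected with `W`). -/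
noncomputable def dOn (G : SimpleGraph V) (W X : Set V) : ℤ :=
  (X.ncard : ℤ) - ((nbhd G X ∩ W).ncard : ℤ)

/-- The difference `d(X) = |X| - |N(X)|` in `G`. -/
noncomputable def dG (G : SimpleGraph V) (X : Set V) : ℤ := dOn G Set.univ X

/-- `S` is a critical independent set of the induced subgraph `G[W]`:
it is an independent subset of `W` whose difference attains
`max {d(Y) : Y ⊆ W}` (the critical difference of `G[W]`). -/
def IsCritIndepOn (G : SimpleGraph V) (W S : Set V) : Prop :=
  S ⊆ W ∧ IsIndep G S ∧ ∀ Y ⊆ W, dOn G W Y ≤ dOn G W S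

/-- `S` is a critical independent set of `G`. -/
def IsCritIndep (G : SimpleGraph V) (S : Set V) : Prop := IsCritIndepOn G Set.univ S

/-- A maximum critical independent set of `G[W]`: a critical independent set of
largest cardinality. -/
def IsMaxCritIndepOn (G : SimpleGraph V) (W S : Set V) : Prop :=
  IsCritIndepOn G W S ∧ ∀ T, IsCritIndepOn G W T → T.ncard ≤ S.ncard

/-- A maximum critical independent set of `G`. -/
def IsMaxCritIndep (G : SimpleGraph V) (S : Set V) : Prop := IsMaxCritIndepOn G Set.univ S

/-- A maximum independent set of the induced subgraph `G[W]`. -/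
def IsMaxIndepOn (G : SimpleGraph V) (W S : Set V) : Prop :=
  S ⊆ W ∧ IsIndep G S ∧ ∀ T ⊆ W, IsIndep G T → T.ncard ≤ S.ncard

/-- A maximum independent set of `G`. -/
def IsMaxIndep (G : SimpleGraph V) (S : Set V) : Prop := IsMaxIndepOn G Set.univ S

/-- The independence number of the induced subgraph `G[W]`. -/
noncomputable def alphaOn (G : SimpleGraph V) (W : Set V) : ℕ :=
  sSup {n | ∃ S ⊆ W, IsIndep G S ∧ S.ncard = n}

/-- The independence number `α(G)`. -/
noncomputable def alpha (G : SimpleGraph V) : ℕ := alphaOn G Set.univ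

/-- The maximum matching number `μ(G)`. -/
noncomputable def mu (G : SimpleGraph V) : ℕ :=
  sSup {n | ∃ M : G.Subgraph, M.IsMatching ∧ M.edgeSet.ncard = n}

/-- `G` is a König-Egerváry graph: `α(G) + μ(G) = |V(G)|`. -/
def IsKE (G : SimpleGraph V) : Prop := alpha G + mu G = Fintype.card V

/-- `nucleus(G[W])`: intersection of all maximum critical independent sets of `G[W]`. -/
def nucleusOn (G : SimpleGraph V) (W : Set V) : Set V := ⋂₀ {S | IsMaxCritIndepOn G W S}

/-- `nucleus(G)`. -/
def nucleus (G : SimpleGraph V) : Set V := nucleusOn G Set.univ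

/-- `diadem(G[W])`: union of all maximum critical independent sets of `G[W]`. -/
def diademOn (G : SimpleGraph V) (W : Set V) : Set V := ⋃₀ {S | IsMaxCritIndepOn G W S}

/-- `diadem(G)`. -/
def diadem (G : SimpleGraph V) : Set V := diademOn G Set.univ

/-- `ker(G)`: intersection of all critical independent sets of `G`. -/
def kerG (G : SimpleGraph V) : Set V := ⋂₀ {S | IsCritIndep G S}

/-- `core(G)`: intersection of all maximum independent sets of `G`. -/
def core (G : SimpleGraph V) : Set V := ⋂₀ {S | IsMaxIndep G S}

/-- `corona(G)`: union of all maximum independent sets of `G`. -/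
def corona (G : SimpleGraph V) : Set V := ⋃₀ {S | IsMaxIndep G S}


section AuxLemmas
set_option linter.unusedSectionVars false
variable {G : SimpleGraph V}

lemma nbhd_mono {X Y : Set V} (h : X ⊆ Y) : nbhd G X ⊆ nbhd G Y := by
  rintro v ⟨u, hu, ha⟩; exact ⟨u, h hu, ha⟩

lemma nbhd_union {X Y : Set V} : nbhd G (X ∪ Y) = nbhd G X ∪ nbhd G Y := by
  ext v
  constructor
  · rintro ⟨u, hu | hu, ha⟩
    exacts [Or.inl ⟨u, hu, ha⟩, Or.inr ⟨u, hu, ha⟩]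
  · rintro (⟨u, hu, ha⟩ | ⟨u, hu, ha⟩)
    exacts [⟨u, Or.inl hu, ha⟩, ⟨u, Or.inr hu, ha⟩]

lemma dG_eq (X : Set V) : dG G X = (X.ncard : ℤ) - ((nbhd G X).ncard : ℤ) := by
  simp [dG, dOn]

lemma exists_critIndep (G : SimpleGraph V) : ∃ S, IsCritIndep G S := by
  obtain ⟨X, hX⟩ := Finite.exists_max (fun X : Set V => dG G X)
  set A : Set V := X \ nbhd G X with hA
  have hkey : dG G X ≤ dG G A := by
    have h1 : X.ncard = A.ncard + (X ∩ nbhd G X).ncard := by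
      rw [← Set.ncard_union_eq (disjoint_sdiff_left.mono_right inter_subset_right)]
      congr 1
      exact (Set.diff_union_inter X (nbhd G X)).symm
    have h2 : (nbhd G A).ncard + (X ∩ nbhd G X).ncard ≤ (nbhd G X).ncard := by
      rw [← Set.ncard_union_eq]
      · apply Set.ncard_le_ncard _ (toFinite _)
        apply union_subset (nbhd_mono diff_subset) inter_subset_right
      · rw [disjoint_left]
        rintro v ⟨u, hu, ha⟩ ⟨hvX, _⟩
        exact hu.2 ⟨v, hvX, ha.symm⟩
    rw [dG_eq, dG_eq]
    omega
  refine ⟨A, subset_univ _, ?_, fun Y _ => le_trans (hX Y) hkey⟩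
  intro u hu v hv ha
  exact hv.2 ⟨u, hu.1, ha⟩

lemma exists_maxCritIndep (G : SimpleGraph V) : ∃ J, IsMaxCritIndep G J := by
  obtain ⟨S₀, hS₀⟩ := exists_critIndep G
  have : Nonempty {S : Set V // IsCritIndep G S} := ⟨⟨S₀, hS₀⟩⟩
  obtain ⟨⟨J, hJ⟩, hmax⟩ :=
    Finite.exists_max (fun S : {S : Set V // IsCritIndep G S} => S.val.ncard)
  exact ⟨J, hJ, fun T hT => hmax ⟨T, hT⟩⟩

lemma exists_hallmap (G : SimpleGraph V) {S : Set V} (hS : IsCritIndep G S) :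
    ∃ h : V → V, Set.InjOn h (nbhd G S) ∧ ∀ v ∈ nbhd G S, h v ∈ S ∧ G.Adj v (h v) := by
  classical
  set t : nbhd G S → Finset V := fun v => (toFinite (S ∩ {u | G.Adj v.val u})).toFinset with ht
  have hall : ∀ s : Finset (nbhd G S), s.card ≤ (s.biUnion t).card := by
    intro s
    set B : Set V := Subtype.val '' (↑s : Set (nbhd G S)) with hB
    have hBsub : B ⊆ nbhd G S := by rintro _ ⟨⟨v, hv⟩, _, rfl⟩; exact hv
    have hBcard : B.ncard = s.card := by
      rw [hB, Set.ncard_image_of_injective _ Subtype.val_injective, Set.ncard_coe_finset]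
    have hBiU : ((s.biUnion t : Finset V) : Set V) = S ∩ nbhd G B := by
      ext u
      rw [Finset.mem_coe, Finset.mem_biUnion]
      constructor
      · rintro ⟨⟨v, hv⟩, hvs, hmem⟩
        rw [ht, Set.Finite.mem_toFinset] at hmem
        exact ⟨hmem.1, v, ⟨⟨v, hv⟩, Finset.mem_coe.mpr hvs, rfl⟩, hmem.2⟩
      · rintro ⟨huS, b, ⟨⟨v, hv⟩, hvs, rfl⟩, hadj⟩
        refine ⟨⟨v, hv⟩, Finset.mem_coe.mp hvs, ?_⟩
        rw [ht, Set.Finite.mem_toFinset]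
        exact ⟨huS, hadj⟩
    have hiUcard : (s.biUnion t).card = (S ∩ nbhd G B).ncard := by
      rw [← hBiU, Set.ncard_coe_finset]
    set S' : Set V := S \ nbhd G B with hS'
    have h1 : S.ncard = S'.ncard + (S ∩ nbhd G B).ncard := by
      rw [← Set.ncard_union_eq (disjoint_sdiff_left.mono_right inter_subset_right)]
      congr 1
      exact (Set.diff_union_inter S (nbhd G B)).symm
    have h2 : (nbhd G S').ncard + B.ncard ≤ (nbhd G S).ncard := by
      rw [← Set.ncard_union_eq]
      · apply Set.ncard_le_ncard _ (toFinite _)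
        exact union_subset (nbhd_mono diff_subset) hBsub
      · rw [disjoint_left]
        rintro v ⟨u, hu, ha⟩ hvB
        exact hu.2 ⟨v, hvB, ha.symm⟩
    have h3 : dG G S' ≤ dG G S := hS.2.2 S' (subset_univ _)
    rw [dG_eq, dG_eq] at h3
    omega
  obtain ⟨f, hfinj, hfmem⟩ := (Finset.all_card_le_biUnion_card_iff_exists_injective t).mp hall
  refine ⟨fun v => if hv : v ∈ nbhd G S then f ⟨v, hv⟩ else v, ?_, ?_⟩
  · intro a ha b hb hab
    simp only [dif_pos ha, dif_pos hb] at hab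
    exact Subtype.mk_eq_mk.mp (hfinj hab)
  · intro v hv
    simp only [dif_pos hv]
    have := hfmem ⟨v, hv⟩
    rw [ht, Set.Finite.mem_toFinset] at this
    exact ⟨this.1, this.2⟩

/-- Any two maximum critical independent sets are contained in each other's
closed neighborhoods. -/
lemma maxCrit_subset_closure (G : SimpleGraph V) {S J : Set V}
    (hS : IsMaxCritIndep G S) (hJ : IsMaxCritIndep G J) : J ⊆ S ∪ nbhd G S := by
  obtain ⟨hsmap, hsinj, hsmem⟩ := exists_hallmap G hS.1
  obtain ⟨hjmap, hjinj, hjmem⟩ := exists_hallmap G hJ.1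
  have hSindep : IsIndep G S := hS.1.2.1
  have hJindep : IsIndep G J := hJ.1.2.1
  set P : Set V := J ∩ nbhd G S with hP
  set J₁ : Set V := J \ (S ∪ nbhd G S) with hJ₁
  set D : Set V := nbhd G J \ nbhd G S with hD
  -- h_J maps D into P ∪ J₁
  have claim1 : hjmap '' D ⊆ P ∪ J₁ := by
    rintro _ ⟨x, hxD, rfl⟩
    have hx1 : hjmap x ∈ J := (hjmem x hxD.1).1
    have hx2 : G.Adj x (hjmap x) := (hjmem x hxD.1).2
    by_cases hc : hjmap x ∈ nbhd G S
    · exact Or.inl ⟨hx1, hc⟩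
    · refine Or.inr ⟨hx1, ?_⟩
      rintro (hmem | hmem)
      · exact hxD.2 ⟨hjmap x, hmem, hx2.symm⟩
      · exact hc hmem
  have c1 : D.ncard ≤ P.ncard + J₁.ncard := by
    have e1 : D.ncard = (hjmap '' D).ncard :=
      (Set.ncard_image_of_injOn (hjinj.mono diff_subset)).symm
    have e2 : (hjmap '' D).ncard ≤ (P ∪ J₁).ncard :=
      Set.ncard_le_ncard claim1 (toFinite _)
    have e3 : (P ∪ J₁).ncard = P.ncard + J₁.ncard := by
      refine Set.ncard_union_eq ?_ (toFinite _) (toFinite _)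
      rw [disjoint_left]
      rintro v ⟨_, hv⟩ hv'
      exact hv'.2 (Or.inr hv)
    omega
  -- h_S maps P into D ∩ S
  have claim2 : hsmap '' P ⊆ D ∩ S := by
    rintro _ ⟨p, hpP, rfl⟩
    have hp1 : hsmap p ∈ S := (hsmem p hpP.2).1
    have hp2 : G.Adj p (hsmap p) := (hsmem p hpP.2).2
    refine ⟨⟨⟨p, hpP.1, hp2⟩, ?_⟩, hp1⟩
    rintro ⟨u, hu, ha⟩
    exact hSindep u hu (hsmap p) hp1 ha
  have c2 : P.ncard ≤ (D ∩ S).ncard := by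
    have e1 : P.ncard = (hsmap '' P).ncard :=
      (Set.ncard_image_of_injOn (hsinj.mono (fun x hx => hx.2))).symm
    have e2 : (hsmap '' P).ncard ≤ (D ∩ S).ncard :=
      Set.ncard_le_ncard claim2 (toFinite _)
    omega
  have c3 : D.ncard = (D ∩ S).ncard + (D \ S).ncard := by
    rw [← Set.ncard_union_eq]
    · congr 1
      exact (Set.inter_union_diff D S).symm
    · rw [disjoint_left]
      rintro v ⟨_, hv⟩ hv'
      exact hv'.2 hv
  have c4 : (D \ S).ncard ≤ J₁.ncard := by omega
  -- neighbors of J₁ outside N(S) land in D \ S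
  have claim3 : nbhd G J₁ \ nbhd G S ⊆ D \ S := by
    rintro x ⟨⟨j, hj, hadj⟩, hxn⟩
    refine ⟨⟨⟨j, hj.1, hadj⟩, hxn⟩, fun hxS => ?_⟩
    exact hj.2 (Or.inr ⟨x, hxS, hadj.symm⟩)
  have c5 : (nbhd G J₁ \ nbhd G S).ncard ≤ J₁.ncard :=
    le_trans (Set.ncard_le_ncard claim3 (toFinite _)) c4
  -- S ∪ J₁ is critical independent
  have hindep : IsIndep G (S ∪ J₁) := by
    rintro u (hu | hu) v (hv | hv) hadj
    · exact hSindep u hu v hv hadj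
    · exact hv.2 (Or.inr ⟨u, hu, hadj⟩)
    · exact hu.2 (Or.inr ⟨v, hv, hadj.symm⟩)
    · exact hJindep u hu.1 v hv.1 hadj
  have hcard : (S ∪ J₁).ncard = S.ncard + J₁.ncard := by
    refine Set.ncard_union_eq ?_ (toFinite _) (toFinite _)
    rw [disjoint_left]
    intro v hv hv'
    exact hv'.2 (Or.inl hv)
  have hnb : (nbhd G (S ∪ J₁)).ncard ≤ (nbhd G S).ncard + J₁.ncard := by
    have e1 : nbhd G (S ∪ J₁) = nbhd G S ∪ (nbhd G J₁ \ nbhd G S) := by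
      rw [nbhd_union, union_diff_self]
    have e2 : (nbhd G S ∪ (nbhd G J₁ \ nbhd G S)).ncard
        ≤ (nbhd G S).ncard + (nbhd G J₁ \ nbhd G S).ncard := Set.ncard_union_le _ _
    rw [e1]
    omega
  have hd : dG G S ≤ dG G (S ∪ J₁) := by
    rw [dG_eq, dG_eq]
    omega
  have hcrit : IsCritIndep G (S ∪ J₁) :=
    ⟨subset_univ _, hindep, fun Y hY => le_trans (hS.1.2.2 Y hY) hd⟩
  have hle : (S ∪ J₁).ncard ≤ S.ncard := hS.2 _ hcrit
  have hJ₁0 : J₁.ncard = 0 := by omega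
  have hJ₁ : J₁ = ∅ := (Set.ncard_eq_zero (toFinite _)).mp hJ₁0
  intro x hx
  by_contra hmem
  have : x ∈ J₁ := ⟨hx, hmem⟩
  rw [hJ₁] at this
  exact this

lemma ncard_le_alpha (G : SimpleGraph V) {S : Set V} (hS : IsIndep G S) :
    S.ncard ≤ alpha G := by
  apply le_csSup
  · refine ⟨Fintype.card V, ?_⟩
    rintro n ⟨T, _, _, rfl⟩
    have := Set.ncard_le_ncard (subset_univ T) (toFinite _)
    rwa [Set.ncard_univ, Nat.card_eq_fintype_card] at this
  · exact ⟨S, subset_univ _, hS, rfl⟩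

end AuxLemmas

/-- For any graph `G`, `|nucleus(G)| + |diadem(G)| ≤ 2α(G)`. -/
theorem stmt14 (G : SimpleGraph V) :
    (nucleus G).ncard + (diadem G).ncard ≤ 2 * alpha G := by
  classical
  obtain ⟨J, hJ⟩ := exists_maxCritIndep G
  obtain ⟨h, hinj, hmem⟩ := exists_hallmap G hJ.1
  have hJindep : IsIndep G J := hJ.1.2.1
  have hnuc : nucleus G ⊆ J := sInter_subset_of_mem hJ
  have hdia : diadem G ⊆ J ∪ nbhd G J :=
    sUnion_subset fun S hS => maxCrit_subset_closure G hJ hS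
  have himg : h '' (diadem G ∩ nbhd G J) ⊆ J \ nucleus G := by
    rintro _ ⟨u, ⟨hud, hun⟩, rfl⟩
    obtain ⟨S, hSmem, huS⟩ := hud
    refine ⟨(hmem u hun).1, fun hcon => ?_⟩
    have hhu : h u ∈ S := (sInter_subset_of_mem hSmem) hcon
    exact hSmem.1.2.1 u huS (h u) hhu (hmem u hun).2
  have c1 : (diadem G ∩ nbhd G J).ncard ≤ (J \ nucleus G).ncard := by
    have e1 : (diadem G ∩ nbhd G J).ncard = (h '' (diadem G ∩ nbhd G J)).ncard :=
      (Set.ncard_image_of_injOn (hinj.mono inter_subset_right)).symm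
    have e2 := Set.ncard_le_ncard himg (toFinite _)
    omega
  have c2 : (J \ nucleus G).ncard + (nucleus G).ncard = J.ncard := by
    rw [← Set.ncard_union_eq disjoint_sdiff_left]
    congr 1
    exact diff_union_of_subset hnuc
  have c3 : (diadem G).ncard ≤ (diadem G ∩ J).ncard + (diadem G ∩ nbhd G J).ncard := by
    have e1 : diadem G = (diadem G ∩ J) ∪ (diadem G ∩ nbhd G J) := by
      rw [← inter_union_distrib_left]
      exact (inter_eq_left.mpr hdia).symm
    calc (diadem G).ncard = ((diadem G ∩ J) ∪ (diadem G ∩ nbhd G J)).ncard := by rw [← e1]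
    _ ≤ _ := Set.ncard_union_le _ _
  have c4 : (diadem G ∩ J).ncard ≤ J.ncard :=
    Set.ncard_le_ncard inter_subset_right (toFinite _)
  have c5 : J.ncard ≤ alpha G := ncard_le_alpha G hJindep
  omega
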